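/- Let G be a matchable graph and S a set of edges of G. Then S is a global forcing set of G if and only if S contains at least one edge of every conformal cycle of G. -/

import Mathlib

/-- `M` is a perfect matching of `G`, regarded as a set of edges: every edge of `M` is an
edge of `G` and every vertex lies in exactly one edge of `M`. -/
def IsPM {V : Type*} (G : SimpleGraph V) (M : Set (Sym2 V)) : Prop :=
  M ⊆ G.edgeSet ∧ ∀ w : V, ∃! e, e ∈ M ∧ w ∈ e

/-- A graph is matchable if it has a perfect matching. -/
def Matchable {V : Type*} (G : SimpleGraph V) : Prop :=
  ∃ M, IsPM G M


namespace PMaux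

lemma even_card_of_involutive {V : Type*} [Fintype V] (f : V → V)
    (h : ∀ w, f (f w) = w) (hne : ∀ w, f w ≠ w) : Even (Fintype.card V) := by
  classical
  set g : Function.End V := f with hg
  have hf : g ^ 2 ^ 1 = 1 := by
    funext w
    simp only [pow_succ, pow_zero, one_mul, Function.End.mul_def, Function.End.one_def,
      Function.comp_apply, id_eq, hg]
    exact h w
  have hmod := Equiv.Perm.card_fixedPoints_modEq (p := 2) (n := 1) hf
  have hfix : Fintype.card (Function.fixedPoints g) = 0 := by
    rw [Fintype.card_eq_zero_iff]
    constructor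
    rintro ⟨x, hx⟩
    exact hne x hx
  rw [hfix, Nat.ModEq] at hmod
  exact Nat.even_iff.mpr (by omega)

variable {V : Type*} {G : SimpleGraph V} {M : Set (Sym2 V)}

noncomputable def pr (hM : IsPM G M) (w : V) : V :=
  Sym2.Mem.other (hM.2 w).exists.choose_spec.2

lemma pr_spec (hM : IsPM G M) (w : V) : s(w, pr hM w) ∈ M := by
  rw [pr, Sym2.other_spec]
  exact (hM.2 w).exists.choose_spec.1

lemma eq_of_mem (hM : IsPM G M) {e : Sym2 V} {w : V} (he : e ∈ M) (hw : w ∈ e) :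
    e = s(w, pr hM w) :=
  (hM.2 w).unique ⟨he, hw⟩ ⟨pr_spec hM w, Sym2.mem_mk_left _ _⟩

lemma pr_eq_of_mem (hM : IsPM G M) {w x : V} (h : s(w, x) ∈ M) : pr hM w = x := by
  have := eq_of_mem hM h (Sym2.mem_mk_left _ _)
  exact (Sym2.congr_right.mp this.symm)

lemma pr_ne (hM : IsPM G M) (w : V) : pr hM w ≠ w := by
  intro h
  have := G.not_isDiag_of_mem_edgeSet (hM.1 (pr_spec hM w))
  rw [Sym2.mk_isDiag_iff] at this
  exact this h.symm

lemma pr_pr (hM : IsPM G M) (w : V) : pr hM (pr hM w) = w := by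
  have : s(pr hM w, w) ∈ M := by rw [Sym2.eq_swap]; exact pr_spec hM w
  exact pr_eq_of_mem hM this

lemma adj_pr (hM : IsPM G M) (w : V) : G.Adj w (pr hM w) :=
  (SimpleGraph.mem_edgeSet G).mp (hM.1 (pr_spec hM w))

lemma eq_of_pr_eq {M₁ M₂ : Set (Sym2 V)} (h₁ : IsPM G M₁) (h₂ : IsPM G M₂)
    (h : pr h₁ = pr h₂) : M₁ = M₂ := by
  ext e
  constructor <;> intro he
  · induction e with
    | h x y =>
      have hxy : pr h₁ x = y := pr_eq_of_mem h₁ he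
      rw [h] at hxy
      rw [← hxy]
      exact pr_spec h₂ x
  · induction e with
    | h x y =>
      have hxy : pr h₂ x = y := pr_eq_of_mem h₂ he
      rw [← h] at hxy
      rw [← hxy]
      exact pr_spec h₁ x

lemma even_card (hM : IsPM G M) [Fintype V] : Even (Fintype.card V) :=
  even_card_of_involutive (pr hM) (pr_pr hM) (pr_ne hM)

lemma pr_inj (hM : IsPM G M) : Function.Injective (pr hM) :=
  Function.Involutive.injective (pr_pr hM)

end PMaux


section AltE

variable {V : Type*} {G : SimpleGraph V}

def altE : {u v : V} → G.Walk u v → Bool → List (Sym2 V)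
  | _, _, SimpleGraph.Walk.nil, _ => []
  | _, _, SimpleGraph.Walk.cons (u := a) (v := b) _ p, true => s(a, b) :: altE p false
  | _, _, SimpleGraph.Walk.cons _ p, false => altE p true

lemma altE_subset : ∀ {u v : V} (p : G.Walk u v) (b : Bool), ∀ e ∈ altE p b, e ∈ p.edges := by
  intro u v p
  induction p with
  | nil => intro b e he; simp [altE] at he
  | cons h q ih =>
      intro b e he
      cases b with
      | true =>
          rw [altE, List.mem_cons] at he
          rcases he with rfl | he
          · simp [SimpleGraph.Walk.edges_cons]
          · rw [SimpleGraph.Walk.edges_cons]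
            exact List.mem_cons_of_mem _ (ih false e he)
      | false =>
          rw [altE] at he
          rw [SimpleGraph.Walk.edges_cons]
          exact List.mem_cons_of_mem _ (ih true e he)

lemma start_ne_end_of_nodup {u v : V} (p : G.Walk u v) (hnd : p.support.Nodup)
    (hl : 0 < p.length) : u ≠ v := by
  cases p with
  | nil => simp at hl
  | cons h q =>
      rw [SimpleGraph.Walk.support_cons] at hnd
      intro huv
      exact (List.nodup_cons.mp hnd).1 (huv ▸ q.end_mem_support)

lemma altE_spec : ∀ {u v : V} (p : G.Walk u v), p.support.Nodup →
    ((∀ w, (∃ e ∈ altE p true, w ∈ e) ↔ (w ∈ p.support ∧ (Odd p.length ∨ w ≠ v))) ∧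
     (∀ w, (∃ e ∈ altE p false, w ∈ e) ↔
        (w ∈ p.support ∧ w ≠ u ∧ (Even p.length ∨ w ≠ v))) ∧
     (∀ b : Bool, ∀ e₁ ∈ altE p b, ∀ e₂ ∈ altE p b, ∀ w, w ∈ e₁ → w ∈ e₂ → e₁ = e₂)) := by
  intro u v p
  induction p with
  | nil =>
      intro _
      refine ⟨?_, ?_, ?_⟩
      · intro w
        simp [altE]
      · intro w
        simp [altE]
      · intro b e₁ he₁
        simp [altE] at he₁
  | @cons u x v hadj q ih =>
      intro hnd
      rw [SimpleGraph.Walk.support_cons] at hnd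
      have hu_nin : u ∉ q.support := (List.nodup_cons.mp hnd).1
      have hqnd : q.support.Nodup := (List.nodup_cons.mp hnd).2
      obtain ⟨iht, ihf, ihu⟩ := ih hqnd
      have huv : u ≠ v := fun huv => hu_nin (huv ▸ q.end_mem_support)
      have hxin : x ∈ q.support := q.start_mem_support
      have hxv : 0 < q.length → x ≠ v := fun hl => start_ne_end_of_nodup q hqnd hl
      refine ⟨?_, ?_, ?_⟩
      · -- altE (cons) true
        intro w
        rw [altE]
        constructor
        · rintro ⟨e, he, hwe⟩
          rcases List.mem_cons.mp he with rfl | he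
          · rw [Sym2.mem_iff] at hwe
            rcases hwe with rfl | rfl
            · refine ⟨?_, Or.inr huv⟩
              rw [SimpleGraph.Walk.support_cons]
              exact List.mem_cons_self
            · refine ⟨?_, ?_⟩
              · rw [SimpleGraph.Walk.support_cons]; exact List.mem_cons_of_mem _ hxin
              · rcases Nat.eq_zero_or_pos q.length with hl | hl
                · left
                  rw [SimpleGraph.Walk.length_cons, hl]
                  exact ⟨0, rfl⟩
                · right; exact hxv hl
          · obtain ⟨hw1, hw2, hw3⟩ := (ihf w).mp ⟨e, he, hwe⟩
            refine ⟨?_, ?_⟩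
            · rw [SimpleGraph.Walk.support_cons]; exact List.mem_cons_of_mem _ hw1
            · rcases hw3 with he' | hne
              · left
                rw [SimpleGraph.Walk.length_cons]
                exact Even.add_one he'
              · right; exact hne
        · rintro ⟨hw1, hw2⟩
          rw [SimpleGraph.Walk.support_cons, List.mem_cons] at hw1
          rcases hw1 with rfl | hw1
          · exact ⟨s(w, x), List.mem_cons_self, Sym2.mem_mk_left _ _⟩
          · by_cases hwx : w = x
            · subst hwx
              exact ⟨s(u, w), List.mem_cons_self, Sym2.mem_mk_right _ _⟩
            · have : ∃ e ∈ altE q false, w ∈ e := by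
                apply (ihf w).mpr
                refine ⟨hw1, hwx, ?_⟩
                rcases hw2 with ho | hne
                · left
                  rw [SimpleGraph.Walk.length_cons] at ho
                  rcases Nat.even_or_odd q.length with he | hodd
                  · exact he
                  · exfalso
                    rcases ho with ⟨t, ht⟩
                    rcases hodd with ⟨t', ht'⟩
                    omega
                · right; exact hne
              obtain ⟨e, he, hwe⟩ := this
              exact ⟨e, List.mem_cons_of_mem _ he, hwe⟩
      · -- altE (cons) false
        intro w
        rw [altE]
        rw [iht w]
        constructor
        · rintro ⟨hw1, hw2⟩
          refine ⟨?_, ?_, ?_⟩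
          · rw [SimpleGraph.Walk.support_cons]; exact List.mem_cons_of_mem _ hw1
          · intro hwu; exact hu_nin (hwu ▸ hw1)
          · rcases hw2 with ho | hne
            · left
              rw [SimpleGraph.Walk.length_cons]
              exact Odd.add_one ho
            · right; exact hne
        · rintro ⟨hw1, hw2, hw3⟩
          rw [SimpleGraph.Walk.support_cons, List.mem_cons] at hw1
          rcases hw1 with rfl | hw1
          · exact absurd rfl hw2
          · refine ⟨hw1, ?_⟩
            rcases hw3 with he | hne
            · left
              rw [SimpleGraph.Walk.length_cons] at he
              rcases Nat.even_or_odd q.length with he' | hodd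
              · exfalso
                rcases he with ⟨t, ht⟩
                rcases he' with ⟨t', ht'⟩
                omega
              · exact hodd
            · right; exact hne
      · -- uniqueness
        intro b e₁ he₁ e₂ he₂ w hwe₁ hwe₂
        cases b with
        | false =>
            rw [altE] at he₁ he₂
            exact ihu true e₁ he₁ e₂ he₂ w hwe₁ hwe₂
        | true =>
            rw [altE, List.mem_cons] at he₁ he₂
            have key : ∀ e ∈ altE q false, w ∈ e → w ≠ u ∧ w ≠ x := by
              intro e he hwe
              obtain ⟨hw1, hw2, -⟩ := (ihf w).mp ⟨e, he, hwe⟩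
              exact ⟨fun hwu => hu_nin (hwu ▸ hw1), hw2⟩
            rcases he₁ with rfl | he₁ <;> rcases he₂ with rfl | he₂
            · rfl
            · exfalso
              obtain ⟨hne1, hne2⟩ := key e₂ he₂ hwe₂
              rw [Sym2.mem_iff] at hwe₁
              rcases hwe₁ with rfl | rfl
              · exact hne1 rfl
              · exact hne2 rfl
            · exfalso
              obtain ⟨hne1, hne2⟩ := key e₁ he₁ hwe₁
              rw [Sym2.mem_iff] at hwe₂
              rcases hwe₂ with rfl | rfl
              · exact hne1 rfl
              · exact hne2 rfl
            · exact ihu false e₁ he₁ e₂ he₂ w hwe₁ hwe₂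

end AltE


section AltChain

variable {V : Type*} {G : SimpleGraph V}

noncomputable def altChain (f₁ f₂ : V → V) (h1 : ∀ w, G.Adj w (f₁ w))
    (h2 : ∀ w, G.Adj w (f₂ w)) (v₀ : V) : (i : ℕ) → G.Walk v₀ ((f₂ ∘ f₁)^[i] v₀)
  | 0 => SimpleGraph.Walk.nil
  | i + 1 =>
    ((altChain f₁ f₂ h1 h2 v₀ i).append
      (SimpleGraph.Walk.cons (h1 _) (SimpleGraph.Walk.cons (h2 _) SimpleGraph.Walk.nil))).copy
      rfl (by rw [Function.iterate_succ_apply']; rfl)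

lemma altChain_support (f₁ f₂ : V → V) (h1 : ∀ w, G.Adj w (f₁ w))
    (h2 : ∀ w, G.Adj w (f₂ w)) (v₀ : V) (i : ℕ) :
    (altChain f₁ f₂ h1 h2 v₀ i).support =
      v₀ :: (List.range i).flatMap
        (fun j => [f₁ ((f₂ ∘ f₁)^[j] v₀), (f₂ ∘ f₁)^[j+1] v₀]) := by
  induction i with
  | zero => simp [altChain]
  | succ i ih =>
      rw [altChain, SimpleGraph.Walk.support_copy, SimpleGraph.Walk.support_append, ih,
        List.range_succ, List.flatMap_append]
      simp [Function.iterate_succ_apply']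

lemma altChain_edges (f₁ f₂ : V → V) (h1 : ∀ w, G.Adj w (f₁ w))
    (h2 : ∀ w, G.Adj w (f₂ w)) (v₀ : V) (i : ℕ) :
    (altChain f₁ f₂ h1 h2 v₀ i).edges =
      (List.range i).flatMap
        (fun j => [s((f₂ ∘ f₁)^[j] v₀, f₁ ((f₂ ∘ f₁)^[j] v₀)),
                   s(f₁ ((f₂ ∘ f₁)^[j] v₀), (f₂ ∘ f₁)^[j+1] v₀)]) := by
  induction i with
  | zero => simp [altChain]
  | succ i ih =>
      rw [altChain, SimpleGraph.Walk.edges_copy, SimpleGraph.Walk.edges_append, ih,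
        List.range_succ, List.flatMap_append]
      simp [Function.iterate_succ_apply']

lemma altChain_length (f₁ f₂ : V → V) (h1 : ∀ w, G.Adj w (f₁ w))
    (h2 : ∀ w, G.Adj w (f₂ w)) (v₀ : V) (i : ℕ) :
    (altChain f₁ f₂ h1 h2 v₀ i).length = 2 * i := by
  induction i with
  | zero => simp [altChain]
  | succ i ih =>
      rw [altChain, SimpleGraph.Walk.length_copy, SimpleGraph.Walk.length_append, ih]
      simp
      omega

lemma flatMap_pair_eq_map_range {α : Type*} (a b : ℕ → α) (k : ℕ) :
    (List.range k).flatMap (fun j => [a j, b j]) =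
      (List.range (2*k)).map (fun m => if Even m then a (m/2) else b (m/2)) := by
  induction k with
  | zero => simp
  | succ k ih =>
      rw [List.range_succ, List.flatMap_append, ih]
      have h2 : 2 * (k+1) = (2*k + 1) + 1 := by ring
      rw [h2, List.range_succ, List.range_succ]
      rw [List.map_append, List.map_append]
      have he : Even (2*k) := ⟨k, by ring⟩
      have ho : ¬ Even (2*k+1) := by simp [Nat.even_add_one, he]
      simp only [List.map_cons, List.map_nil, if_pos he, if_neg ho]
      have : (2*k)/2 = k := by omega
      have h' : (2*k+1)/2 = k := by omega
      rw [this, h']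
      simp

end AltChain


open PMaux in
lemma exists_conformal_cycle {V : Type*} [Fintype V] {G : SimpleGraph V}
    {M₁ M₂ : Set (Sym2 V)} (h₁ : IsPM G M₁) (h₂ : IsPM G M₂) (hne : M₁ ≠ M₂) :
    ∃ (a : V) (C : G.Walk a a), C.IsCycle ∧
      Matchable (SimpleGraph.induce {v : V | v ∉ C.support} G) ∧
      ∀ e ∈ C.edges, (e ∈ M₁ ∧ e ∉ M₂) ∨ (e ∈ M₂ ∧ e ∉ M₁) := by
  classical
  obtain ⟨v₀, hv₀⟩ : ∃ v, pr h₁ v ≠ pr h₂ v := by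
    by_contra h
    push_neg at h
    exact hne (eq_of_pr_eq h₁ h₂ (funext h))
  have pp1 : ∀ w, pr h₁ (pr h₁ w) = w := pr_pr h₁
  have pp2 : ∀ w, pr h₂ (pr h₂ w) = w := pr_pr h₂
  have pne1 : ∀ w, pr h₁ w ≠ w := pr_ne h₁
  have pne2 : ∀ w, pr h₂ w ≠ w := pr_ne h₂
  have inj1 : Function.Injective (pr h₁) := pr_inj h₁
  have spec1 : ∀ w, s(w, pr h₁ w) ∈ M₁ := pr_spec h₁
  have spec2 : ∀ w, s(w, pr h₂ w) ∈ M₂ := pr_spec h₂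
  have uni1 : ∀ w x, s(w, x) ∈ M₁ → pr h₁ w = x := fun w x => pr_eq_of_mem h₁
  have uni2 : ∀ w x, s(w, x) ∈ M₂ → pr h₂ w = x := fun w x => pr_eq_of_mem h₂
  have uniq1 : ∀ (e : Sym2 V) (w : V), e ∈ M₁ → w ∈ e → e = s(w, pr h₁ w) :=
    fun e w he hw => eq_of_mem h₁ he hw
  have adj1 : ∀ w, G.Adj w (pr h₁ w) := adj_pr h₁
  have adj2 : ∀ w, G.Adj w (pr h₂ w) := adj_pr h₂
  set f₁ := pr h₁ with hf₁
  set f₂ := pr h₂ with hf₂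
  set σ := f₂ ∘ f₁ with hσ
  set τ := f₁ ∘ f₂ with hτ
  have hτσ : ∀ w, τ (σ w) = w := fun w => by
    simp only [hσ, hτ, Function.comp_apply, pp2, pp1]
  have hστ : ∀ w, σ (τ w) = w := fun w => by
    simp only [hσ, hτ, Function.comp_apply, pp1, pp2]
  have hinj : Function.Injective σ := fun a b h => by
    have := congrArg τ h
    rwa [hτσ, hτσ] at this
  have hA1 : ∀ (t : ℕ) (w : V), f₁ (σ^[t] w) = τ^[t] (f₁ w) := by
    intro t
    induction t with
    | zero => simp
    | succ t ih =>
        intro w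
        rw [Function.iterate_succ_apply, ih (σ w), Function.iterate_succ_apply]
        congr 1
  have hA2 : ∀ (t : ℕ) (w : V), f₂ (σ^[t] w) = τ^[t] (f₂ w) := by
    intro t
    induction t with
    | zero => simp
    | succ t ih =>
        intro w
        rw [Function.iterate_succ_apply, ih (σ w), Function.iterate_succ_apply]
        congr 1
        simp only [hσ, hτ, Function.comp_apply, pp2]
  have hB : ∀ (t m : ℕ) (w : V), t ≤ m → τ^[t] (σ^[m] w) = σ^[m - t] w := by
    intro t
    induction t with
    | zero => simp
    | succ t ih =>
        intro m w htm
        obtain ⟨m', rfl⟩ : ∃ m', m = m' + 1 := ⟨m - 1, by omega⟩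
        rw [Function.iterate_succ_apply, Function.iterate_succ_apply' σ m' w, hτσ,
          ih m' w (by omega)]
        congr 1
        omega
  have hB' : ∀ (t : ℕ) (w : V), σ^[t] (τ^[t] w) = w := by
    intro t
    induction t with
    | zero => simp
    | succ t ih =>
        intro w
        rw [Function.iterate_succ_apply τ t w, Function.iterate_succ_apply' σ t,
          ih (τ w), hστ]
  have hper : ∃ m, 0 < m ∧ σ^[m] v₀ = v₀ := by
    have key : ∀ i j : ℕ, i < j → σ^[j] v₀ = σ^[i] v₀ → σ^[j - i] v₀ = v₀ := by
      intro i j hij heq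
      have h' : σ^[i] (σ^[j - i] v₀) = σ^[i] v₀ := by
        rw [← Function.iterate_add_apply]
        have : i + (j - i) = j := by omega
        rw [this, heq]
      exact hinj.iterate i h'
    obtain ⟨i, j, hij, hmap⟩ :=
      Finite.exists_ne_map_eq_of_infinite (fun i : ℕ => σ^[i] v₀)
    rcases hij.lt_or_gt with h | h
    · exact ⟨j - i, by omega, key i j h hmap.symm⟩
    · exact ⟨i - j, by omega, key j i h hmap⟩
  set k := Nat.find hper with hkdef
  have hk : 0 < k ∧ σ^[k] v₀ = v₀ := Nat.find_spec hper
  have kmin : ∀ m, m < k → ¬(0 < m ∧ σ^[m] v₀ = v₀) := fun m hm => Nat.find_min hper hm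
  have orb_inj : ∀ i j : ℕ, i ≤ j → j - i < k → σ^[i] v₀ = σ^[j] v₀ → i = j := by
    intro i j hij hlt heq
    have h' : σ^[i] (σ^[j - i] v₀) = σ^[i] v₀ := by
      rw [← Function.iterate_add_apply]
      have : i + (j - i) = j := by omega
      rw [this, heq]
    have h'' : σ^[j - i] v₀ = v₀ := hinj.iterate i h'
    by_contra hcon
    exact kmin (j - i) hlt ⟨by omega, h''⟩
  have no_cross : ∀ i j : ℕ, σ^[i] v₀ ≠ f₁ (σ^[j] v₀) := by
    intro i j hc
    have h1 : σ^[i] v₀ = τ^[j] (f₁ v₀) := hc.trans (hA1 j v₀)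
    have hm : f₁ v₀ = σ^[j + i] v₀ := by
      have h2 := congrArg (σ^[j]) h1
      rw [hB' j (f₁ v₀), ← Function.iterate_add_apply] at h2
      exact h2.symm
    rcases Nat.even_or_odd (j + i) with ⟨t, ht⟩ | ⟨t, ht⟩
    · have hcon : f₁ (σ^[t] v₀) = σ^[t] v₀ := by
        rw [hA1, hm, hB t (j + i) v₀ (by omega)]
        congr 1
        omega
      exact pne1 _ hcon
    · have hfv2 : f₂ v₀ = σ^[(j + i) + 1] v₀ := by
        have hstep : f₂ v₀ = σ (f₁ v₀) := by
          simp only [hσ, Function.comp_apply, pp1]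
        rw [hstep, hm, ← Function.iterate_succ_apply' σ]
      have hcon : f₂ (σ^[t + 1] v₀) = σ^[t + 1] v₀ := by
        rw [hA2, hfv2, hB (t + 1) (j + i + 1) v₀ (by omega)]
        congr 1
        omega
      exact pne2 _ hcon
  have hD : ∀ j : ℕ, f₁ (σ^[j] v₀) ≠ f₂ (σ^[j] v₀) := by
    intro j
    induction j with
    | zero => simpa using hv₀
    | succ j ih =>
        rw [Function.iterate_succ_apply' σ j v₀]
        intro hcontra
        have hx1 : f₂ (σ (σ^[j] v₀)) = f₁ (σ^[j] v₀) := by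
          simp only [hσ, Function.comp_apply, pp2]
        rw [hx1] at hcontra
        have h2 : σ (σ^[j] v₀) = σ^[j] v₀ := inj1 hcontra
        have h3 := congrArg f₂ h2
        simp only [hσ, Function.comp_apply, pp2] at h3
        exact ih h3
  have hD' : ∀ x : V, f₁ x ≠ f₂ x → f₁ (f₁ x) ≠ f₂ (f₁ x) := by
    intro x hx hcon
    rw [pp1] at hcon
    have := congrArg f₂ hcon
    rw [pp2] at this
    exact hx this.symm
  have hk2 : 2 ≤ k := by
    by_contra hcon
    have hk1 : k = 1 := by omega
    have : σ v₀ = v₀ := by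
      have := hk.2
      rw [hk1] at this
      simpa using this
    have h2 := congrArg f₂ this
    simp only [hσ, Function.comp_apply, pp2] at h2
    exact hv₀ h2
  -- the cycle
  set C : G.Walk v₀ v₀ := (altChain f₁ f₂ adj1 adj2 v₀ k).copy rfl hk.2 with hC
  set F : ℕ → V := fun m => if Even m then f₁ (σ^[m / 2] v₀) else σ^[m / 2 + 1] v₀ with hF
  set Fe : ℕ → Sym2 V := fun m =>
    if Even m then s(σ^[m / 2] v₀, f₁ (σ^[m / 2] v₀))
    else s(f₁ (σ^[m / 2] v₀), σ^[m / 2 + 1] v₀) with hFe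
  have hsupp2 : C.support = v₀ :: (List.range (2 * k)).map F := by
    rw [hC, SimpleGraph.Walk.support_copy, altChain_support, ← hσ,
      flatMap_pair_eq_map_range (fun j => f₁ (σ^[j] v₀)) (fun j => σ^[j + 1] v₀) k]
  have hedg2 : C.edges = (List.range (2 * k)).map Fe := by
    rw [hC, SimpleGraph.Walk.edges_copy, altChain_edges, ← hσ,
      flatMap_pair_eq_map_range (fun j => s(σ^[j] v₀, f₁ (σ^[j] v₀)))
        (fun j => s(f₁ (σ^[j] v₀), σ^[j + 1] v₀)) k]
  have hlen : C.length = 2 * k := by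
    rw [hC, SimpleGraph.Walk.length_copy, altChain_length]
  have half_lt : ∀ m : ℕ, m < 2 * k → m / 2 < k := fun m hm => by omega
  have hFinj : ∀ m ∈ List.range (2 * k), ∀ m' ∈ List.range (2 * k), F m = F m' → m = m' := by
    intro m hm m' hm' hFeq
    rw [List.mem_range] at hm hm'
    rcases Nat.even_or_odd m with hme | hmo <;> rcases Nat.even_or_odd m' with hme' | hmo'
    · rw [hF] at hFeq
      simp only [if_pos hme, if_pos hme'] at hFeq
      have heq : σ^[m / 2] v₀ = σ^[m' / 2] v₀ := inj1 hFeq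
      have : m / 2 = m' / 2 := by
        rcases le_total (m / 2) (m' / 2) with h | h
        · exact orb_inj _ _ h (by omega) heq
        · exact (orb_inj _ _ h (by omega) heq.symm).symm
      rw [Nat.even_iff] at hme hme'
      omega
    · exfalso
      rw [hF] at hFeq
      have hno : ¬ Even m' := by rw [Nat.even_iff]; rw [Nat.odd_iff] at hmo'; omega
      simp only [if_pos hme, if_neg hno] at hFeq
      exact no_cross (m' / 2 + 1) (m / 2) hFeq.symm
    · exfalso
      rw [hF] at hFeq
      have hno : ¬ Even m := by rw [Nat.even_iff]; rw [Nat.odd_iff] at hmo; omega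
      simp only [if_neg hno, if_pos hme'] at hFeq
      exact no_cross (m / 2 + 1) (m' / 2) hFeq
    · rw [hF] at hFeq
      have hno : ¬ Even m := by rw [Nat.even_iff]; rw [Nat.odd_iff] at hmo; omega
      have hno' : ¬ Even m' := by rw [Nat.even_iff]; rw [Nat.odd_iff] at hmo'; omega
      simp only [if_neg hno, if_neg hno'] at hFeq
      have : m / 2 + 1 = m' / 2 + 1 := by
        rcases le_total (m / 2 + 1) (m' / 2 + 1) with h | h
        · exact orb_inj _ _ h (by omega) hFeq
        · exact (orb_inj _ _ h (by omega) hFeq.symm).symm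
      rw [Nat.odd_iff] at hmo hmo'
      omega
  have hFeinj : ∀ m ∈ List.range (2 * k), ∀ m' ∈ List.range (2 * k), Fe m = Fe m' → m = m' := by
    intro m hm m' hm' hFeq
    rw [List.mem_range] at hm hm'
    rcases Nat.even_or_odd m with hme | hmo <;> rcases Nat.even_or_odd m' with hme' | hmo'
    · rw [hFe] at hFeq
      simp only [if_pos hme, if_pos hme'] at hFeq
      rw [Sym2.eq_iff] at hFeq
      rcases hFeq with ⟨hu, -⟩ | ⟨hu, -⟩
      · have : m / 2 = m' / 2 := by
          rcases le_total (m / 2) (m' / 2) with h | h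
          · exact orb_inj _ _ h (by omega) hu
          · exact (orb_inj _ _ h (by omega) hu.symm).symm
        rw [Nat.even_iff] at hme hme'
        omega
      · exact absurd hu (no_cross _ _)
    · exfalso
      rw [hFe] at hFeq
      have hno : ¬ Even m' := by rw [Nat.even_iff]; rw [Nat.odd_iff] at hmo'; omega
      simp only [if_pos hme, if_neg hno] at hFeq
      rw [Sym2.eq_iff] at hFeq
      rcases hFeq with ⟨hu, -⟩ | ⟨hu, hv⟩
      · exact no_cross _ _ hu
      · have h1 : σ^[m / 2] v₀ = σ^[m' / 2] v₀ := inj1 hv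
        have h2 : m / 2 = m' / 2 := by
          rcases le_total (m / 2) (m' / 2) with h | h
          · exact orb_inj _ _ h (by omega) h1
          · exact (orb_inj _ _ h (by omega) h1.symm).symm
        rw [h2] at hu
        have : m' / 2 = m' / 2 + 1 := orb_inj _ _ (by omega) (by omega) hu
        omega
    · exfalso
      rw [hFe] at hFeq
      have hno : ¬ Even m := by rw [Nat.even_iff]; rw [Nat.odd_iff] at hmo; omega
      simp only [if_neg hno, if_pos hme'] at hFeq
      rw [Sym2.eq_iff] at hFeq
      rcases hFeq with ⟨hu, -⟩ | ⟨hv, hu⟩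
      · exact no_cross _ _ hu.symm
      · have h1 : σ^[m / 2] v₀ = σ^[m' / 2] v₀ := inj1 hv
        have h2 : σ^[m / 2 + 1] v₀ = σ^[m / 2] v₀ := hu.trans h1.symm
        have : m / 2 = m / 2 + 1 := orb_inj _ _ (by omega) (by omega) h2.symm
        omega
    · rw [hFe] at hFeq
      have hno : ¬ Even m := by rw [Nat.even_iff]; rw [Nat.odd_iff] at hmo; omega
      have hno' : ¬ Even m' := by rw [Nat.even_iff]; rw [Nat.odd_iff] at hmo'; omega
      simp only [if_neg hno, if_neg hno'] at hFeq
      rw [Sym2.eq_iff] at hFeq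
      rcases hFeq with ⟨hu, -⟩ | ⟨hu, -⟩
      · have h1 : σ^[m / 2] v₀ = σ^[m' / 2] v₀ := inj1 hu
        have : m / 2 = m' / 2 := by
          rcases le_total (m / 2) (m' / 2) with h | h
          · exact orb_inj _ _ h (by omega) h1
          · exact (orb_inj _ _ h (by omega) h1.symm).symm
        rw [Nat.odd_iff] at hmo hmo'
        omega
      · exact absurd hu.symm (no_cross _ _)
  have hsuppnd : C.support.tail.Nodup := by
    rw [hsupp2]
    exact List.nodup_range.map_on hFinj
  have hednd : C.edges.Nodup := by
    rw [hedg2]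
    exact List.nodup_range.map_on hFeinj
  have hnenil : C ≠ SimpleGraph.Walk.nil := by
    intro h
    rw [h] at hlen
    simp at hlen
    omega
  have hcyc : C.IsCycle := ⟨⟨⟨hednd⟩, hnenil⟩, hsuppnd⟩
  -- support membership helpers
  have hin : ∀ m, m < 2 * k → F m ∈ C.support := by
    intro m hm
    rw [hsupp2]
    right
    exact List.mem_map.mpr ⟨m, List.mem_range.mpr hm, rfl⟩
  have hv₀in : v₀ ∈ C.support := by rw [hsupp2]; left
  have hout : ∀ w, w ∈ C.support → w = v₀ ∨ ∃ m, m < 2 * k ∧ F m = w := by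
    intro w hw
    rw [hsupp2] at hw
    rcases List.mem_cons.mp hw with h | h
    · exact Or.inl h
    · obtain ⟨m, hm, hFm⟩ := List.mem_map.mp h
      exact Or.inr ⟨m, List.mem_range.mp hm, hFm⟩
  have hF0 : F 0 = f₁ v₀ := by simp [hF]
  have hstay : ∀ v : V, v ∉ C.support → f₁ v ∉ C.support := by
    intro v hv hfv
    rcases hout _ hfv with h | ⟨m, hm, hFm⟩
    · apply hv
      have hveq : v = f₁ v₀ := by
        have := congrArg f₁ h
        rwa [pp1] at this
      rw [hveq, ← hF0]
      exact hin 0 (by omega)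
    · rcases Nat.even_or_odd m with hme | hmo
      · have heq : f₁ (σ^[m / 2] v₀) = f₁ v := by
          rw [hF] at hFm
          simpa only [if_pos hme] using hFm
        have hvv : v = σ^[m / 2] v₀ := (inj1 heq).symm
        apply hv
        rw [hvv]
        by_cases hq : m / 2 = 0
        · rw [hq]
          simpa using hv₀in
        · have hodd : ¬ Even (2 * (m / 2) - 1) := by rw [Nat.even_iff]; omega
          have hFo : F (2 * (m / 2) - 1) = σ^[m / 2] v₀ := by
            rw [hF]
            simp only [if_neg hodd]
            congr 1
            omega
          rw [← hFo]
          exact hin _ (by omega)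
      · have hno : ¬ Even m := by rw [Nat.even_iff]; rw [Nat.odd_iff] at hmo; omega
        have hstep : σ^[m / 2 + 1] v₀ = f₁ v := by
          rw [hF] at hFm
          simpa only [if_neg hno] using hFm
        have hvv : v = f₁ (σ^[m / 2 + 1] v₀) := by
          rw [hstep, pp1]
        apply hv
        rw [hvv]
        by_cases hqk : m / 2 + 1 = k
        · rw [hqk, hk.2, ← hF0]
          exact hin 0 (by omega)
        · have heven : Even (2 * (m / 2 + 1)) := ⟨m / 2 + 1, by ring⟩
          have hFo : F (2 * (m / 2 + 1)) = f₁ (σ^[m / 2 + 1] v₀) := by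
            rw [hF]
            simp only [if_pos heven]
            have h2q : 2 * (m / 2 + 1) / 2 = m / 2 + 1 := by omega
            rw [h2q]
          rw [← hFo]
          exact hin _ (by omega)
  -- conformality
  have hMatch : Matchable (SimpleGraph.induce {v : V | v ∉ C.support} G) := by
    refine ⟨{e | e.map Subtype.val ∈ M₁}, ?_, ?_⟩
    · intro e he
      induction e with
      | h x y =>
        simp only [Set.mem_setOf_eq, Sym2.map_pair_eq] at he
        have hadj : G.Adj ↑x ↑y := (SimpleGraph.mem_edgeSet G).mp (h₁.1 he)
        exact hadj
    · intro w
      have hw2 : f₁ ↑w ∉ C.support := hstay _ w.2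
      refine ⟨s(w, ⟨f₁ ↑w, hw2⟩), ⟨?_, ?_⟩, ?_⟩
      · show Sym2.map Subtype.val s(w, (⟨f₁ ↑w, hw2⟩ : {v : V | v ∉ C.support})) ∈ M₁
        rw [Sym2.map_pair_eq]
        exact spec1 ↑w
      · exact Sym2.mem_mk_left _ _
      · rintro e' ⟨he', hwe'⟩
        have hmm : (↑w : V) ∈ e'.map Subtype.val := Sym2.mem_map.mpr ⟨w, hwe', rfl⟩
        have h2 := uniq1 _ _ he' hmm
        have h3 : e'.map Subtype.val =
            Sym2.map Subtype.val s(w, (⟨f₁ ↑w, hw2⟩ : {v : V | v ∉ C.support})) := by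
          rw [h2, Sym2.map_pair_eq]
        exact Sym2.map.injective Subtype.val_injective h3
  -- alternation
  have halt : ∀ e ∈ C.edges, (e ∈ M₁ ∧ e ∉ M₂) ∨ (e ∈ M₂ ∧ e ∉ M₁) := by
    intro e he
    rw [hedg2] at he
    obtain ⟨m, hm, hFm⟩ := List.mem_map.mp he
    rw [List.mem_range] at hm
    rcases Nat.even_or_odd m with hme | hmo
    · left
      have heq : e = s(σ^[m / 2] v₀, f₁ (σ^[m / 2] v₀)) := by
        rw [← hFm, hFe]
        simp only [if_pos hme]
      constructor
      · rw [heq]; exact spec1 _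
      · rw [heq]
        intro hmem
        exact hD (m / 2) (uni2 _ _ hmem).symm
    · right
      have hno : ¬ Even m := by rw [Nat.even_iff]; rw [Nat.odd_iff] at hmo; omega
      have hss : σ^[m / 2 + 1] v₀ = f₂ (f₁ (σ^[m / 2] v₀)) := by
        rw [Function.iterate_succ_apply' σ]
        rfl
      have heq : e = s(f₁ (σ^[m / 2] v₀), f₂ (f₁ (σ^[m / 2] v₀))) := by
        rw [← hFm, hFe]
        simp only [if_neg hno]
        rw [hss]
      constructor
      · rw [heq]; exact spec2 _
      · rw [heq]
        intro hmem
        exact hD' _ (hD (m / 2)) (uni1 _ _ hmem)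
  exact ⟨v₀, C, hcyc, hMatch, halt⟩


open PMaux in
lemma two_pms_of_conformal {V : Type*} [Fintype V] {G : SimpleGraph V}
    (hG : Matchable G) {a : V} (C : G.Walk a a) (hcyc : C.IsCycle)
    (hconf : Matchable (SimpleGraph.induce {v : V | v ∉ C.support} G)) :
    ∃ M₁ M₂ : Set (Sym2 V), IsPM G M₁ ∧ IsPM G M₂ ∧ M₁ ≠ M₂ ∧
      ∀ e, e ∉ C.edges → (e ∈ M₁ ↔ e ∈ M₂) := by
  classical
  obtain ⟨Mg, hMg⟩ := hG
  cases C with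
  | nil => exact absurd rfl hcyc.ne_nil
  | cons hadj q =>
    rename_i b
    obtain ⟨M', hM'⟩ := hconf
    have hndC := hcyc.support_nodup
    rw [SimpleGraph.Walk.support_cons, List.tail_cons] at hndC
    have hnd : q.support.Nodup := hndC
    have hEnd : a ∈ q.support := q.end_mem_support
    have hmemC : ∀ w, w ∈ (SimpleGraph.Walk.cons hadj q).support ↔ w ∈ q.support := by
      intro w
      rw [SimpleGraph.Walk.support_cons, List.mem_cons]
      constructor
      · rintro (rfl | h)
        · exact hEnd
        · exact h
      · exact Or.inr
    -- evenness of the cycle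
    have hevenV : Even (Fintype.card V) := even_card hMg
    have hevenT : Even (Fintype.card ↥{v : V | v ∉ (SimpleGraph.Walk.cons hadj q).support}) :=
      even_card hM'
    have hcardP : Fintype.card {w : V // w ∈ (SimpleGraph.Walk.cons hadj q).support} =
        q.support.length := by
      rw [Fintype.card_of_subtype q.support.toFinset
        (fun x => by rw [List.mem_toFinset]; exact (hmemC x).symm)]
      exact List.toFinset_card_of_nodup hnd
    have hcardT : Fintype.card ↥{v : V | v ∉ (SimpleGraph.Walk.cons hadj q).support} =
        Fintype.card V - q.support.length := by
      have hc := Fintype.card_subtype_compl (fun v => v ∈ (SimpleGraph.Walk.cons hadj q).support)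
      rw [hcardP] at hc
      rw [← hc]
      exact Fintype.card_congr (Equiv.subtypeEquivRight (fun x => Iff.rfl))
    have hle : q.support.length ≤ Fintype.card V := by
      rw [← List.toFinset_card_of_nodup hnd, ← Finset.card_univ]
      exact Finset.card_le_univ _
    have hsuplen : q.support.length = q.length + 1 := SimpleGraph.Walk.length_support q
    have hOddq : Odd q.length := by
      rcases hevenV with ⟨c, hc⟩
      rcases hevenT with ⟨d, hd⟩
      rw [hcardT] at hd
      exact ⟨c - d - 1, by omega⟩
    obtain ⟨covT, covF, uniqB⟩ := altE_spec q hnd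
    have covA : ∀ w, (∃ e ∈ altE q true, w ∈ e) ↔ w ∈ q.support := by
      intro w
      rw [covT w]
      exact ⟨And.left, fun h => ⟨h, Or.inl hOddq⟩⟩
    have covB' : ∀ w, (∃ e ∈ altE q false, w ∈ e) ↔ (w ∈ q.support ∧ w ≠ b ∧ w ≠ a) := by
      intro w
      rw [covF w]
      constructor
      · rintro ⟨h1, h2, h3⟩
        refine ⟨h1, h2, ?_⟩
        rcases h3 with he | hne
        · exfalso
          rcases he with ⟨t, ht⟩
          rcases hOddq with ⟨t', ht'⟩
          omega
        · exact hne
      · rintro ⟨h1, h2, h3⟩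
        exact ⟨h1, h2, Or.inr h3⟩
    set MM : Set (Sym2 V) := (Sym2.map Subtype.val) '' M' with hMM
    have hMMsub : MM ⊆ G.edgeSet := by
      rintro e ⟨e', he', rfl⟩
      have hedge : e' ∈ (SimpleGraph.induce {v : V | v ∉ (SimpleGraph.Walk.cons hadj q).support}
          G).edgeSet := hM'.1 he'
      induction e' with
      | h x y =>
          rw [Sym2.map_pair_eq, SimpleGraph.mem_edgeSet]
          rw [SimpleGraph.mem_edgeSet] at hedge
          exact hedge
    have hMMavoid : ∀ e ∈ MM, ∀ w, w ∈ e → w ∉ (SimpleGraph.Walk.cons hadj q).support := by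
      rintro e ⟨e', he', rfl⟩ w hw
      obtain ⟨x, hx, rfl⟩ := Sym2.mem_map.mp hw
      exact x.2
    have hMMcover : ∀ w : V, (hw : w ∉ (SimpleGraph.Walk.cons hadj q).support) →
        ∃! e, e ∈ MM ∧ w ∈ e := by
      intro w hw
      obtain ⟨e₀, ⟨he₀, hwe₀⟩, huniq⟩ := hM'.2 ⟨w, hw⟩
      refine ⟨Sym2.map Subtype.val e₀, ⟨⟨e₀, he₀, rfl⟩, ?_⟩, ?_⟩
      · exact Sym2.mem_map.mpr ⟨⟨w, hw⟩, hwe₀, rfl⟩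
      · rintro e ⟨⟨e', he', rfl⟩, hwe⟩
        obtain ⟨x, hx, hxw⟩ := Sym2.mem_map.mp hwe
        have hx' : x = ⟨w, hw⟩ := Subtype.ext hxw
        rw [hx'] at hx
        rw [huniq e' ⟨he', hx⟩]
    -- generic PM builder
    have mk : ∀ L : List (Sym2 V),
        (∀ e ∈ L, e ∈ (SimpleGraph.Walk.cons hadj q).edges) →
        (∀ w, (∃ e ∈ L, w ∈ e) ↔ w ∈ q.support) →
        (∀ e₁ ∈ L, ∀ e₂ ∈ L, ∀ w, w ∈ e₁ → w ∈ e₂ → e₁ = e₂) →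
        IsPM G (MM ∪ {e | e ∈ L}) := by
      intro L hLsub hLcov hLuniq
      constructor
      · rintro e (he | he)
        · exact hMMsub he
        · exact (SimpleGraph.Walk.cons hadj q).edges_subset_edgeSet (hLsub e he)
      · intro w
        by_cases hw : w ∈ (SimpleGraph.Walk.cons hadj q).support
        · obtain ⟨e, heL, hwe⟩ := (hLcov w).mpr ((hmemC w).mp hw)
          refine ⟨e, ⟨Or.inr heL, hwe⟩, ?_⟩
          rintro e' ⟨he' | he', hwe'⟩
          · exact absurd hw (hMMavoid e' he' w hwe')
          · exact hLuniq e' he' e heL w hwe' hwe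
        · obtain ⟨e, ⟨heMM, hwe⟩, huniq⟩ := hMMcover w hw
          refine ⟨e, ⟨Or.inl heMM, hwe⟩, ?_⟩
          rintro e' ⟨he' | he', hwe'⟩
          · exact huniq e' ⟨he', hwe'⟩
          · exact absurd ((hmemC w).mpr ((hLcov w).mp ⟨e', he', hwe'⟩)) hw
    have hedgesC : (SimpleGraph.Walk.cons hadj q).edges = s(a, b) :: q.edges :=
      SimpleGraph.Walk.edges_cons hadj q
    have hsubA : ∀ e ∈ altE q true, e ∈ (SimpleGraph.Walk.cons hadj q).edges := by
      intro e he
      rw [hedgesC]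
      exact List.mem_cons_of_mem _ (altE_subset q true e he)
    have hPM1 : IsPM G (MM ∪ {e | e ∈ altE q true}) :=
      mk _ hsubA covA (fun e₁ h₁ e₂ h₂ w hw1 hw2 => uniqB true e₁ h₁ e₂ h₂ w hw1 hw2)
    have hsubB : ∀ e ∈ s(a, b) :: altE q false, e ∈ (SimpleGraph.Walk.cons hadj q).edges := by
      intro e he
      rw [hedgesC]
      rcases List.mem_cons.mp he with rfl | he
      · exact List.mem_cons_self
      · exact List.mem_cons_of_mem _ (altE_subset q false e he)
    have covB : ∀ w, (∃ e ∈ s(a, b) :: altE q false, w ∈ e) ↔ w ∈ q.support := by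
      intro w
      constructor
      · rintro ⟨e, he, hwe⟩
        rcases List.mem_cons.mp he with rfl | he
        · rw [Sym2.mem_iff] at hwe
          rcases hwe with rfl | rfl
          · exact hEnd
          · exact q.start_mem_support
        · exact ((covB' w).mp ⟨e, he, hwe⟩).1
      · intro hw
        by_cases hwa : w = a
        · exact ⟨s(a, b), List.mem_cons_self, hwa ▸ Sym2.mem_mk_left _ _⟩
        · by_cases hwb : w = b
          · exact ⟨s(a, b), List.mem_cons_self, hwb ▸ Sym2.mem_mk_right _ _⟩
          · obtain ⟨e, he, hwe⟩ := (covB' w).mpr ⟨hw, hwb, hwa⟩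
            exact ⟨e, List.mem_cons_of_mem _ he, hwe⟩
    have uniqB2 : ∀ e₁ ∈ s(a, b) :: altE q false, ∀ e₂ ∈ s(a, b) :: altE q false,
        ∀ w, w ∈ e₁ → w ∈ e₂ → e₁ = e₂ := by
      have key : ∀ e ∈ altE q false, ∀ w, w ∈ e → w ≠ a ∧ w ≠ b := by
        intro e he w hwe
        obtain ⟨-, h2, h3⟩ := (covB' w).mp ⟨e, he, hwe⟩
        exact ⟨h3, h2⟩
      intro e₁ he₁ e₂ he₂ w hw1 hw2
      rcases List.mem_cons.mp he₁ with rfl | he₁ <;> rcases List.mem_cons.mp he₂ with rfl | he₂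
      · rfl
      · exfalso
        obtain ⟨hna, hnb⟩ := key e₂ he₂ w hw2
        rw [Sym2.mem_iff] at hw1
        rcases hw1 with rfl | rfl
        · exact hna rfl
        · exact hnb rfl
      · exfalso
        obtain ⟨hna, hnb⟩ := key e₁ he₁ w hw1
        rw [Sym2.mem_iff] at hw2
        rcases hw2 with rfl | rfl
        · exact hna rfl
        · exact hnb rfl
      · exact uniqB false e₁ he₁ e₂ he₂ w hw1 hw2
    have hPM2 : IsPM G (MM ∪ {e | e ∈ s(a, b) :: altE q false}) := mk _ hsubB covB uniqB2
    refine ⟨_, _, hPM1, hPM2, ?_, ?_⟩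
    · -- distinct
      intro heq
      have hab2 : s(a, b) ∈ MM ∪ {e | e ∈ s(a, b) :: altE q false} :=
        Or.inr (List.mem_cons_self)
      rw [← heq] at hab2
      rcases hab2 with h | h
      · exact hMMavoid _ h a (Sym2.mem_mk_left _ _) (SimpleGraph.Walk.start_mem_support _)
      · have hqedges : s(a, b) ∈ q.edges := altE_subset q true _ h
        have hnodup := hcyc.edges_nodup
        rw [hedgesC] at hnodup
        exact (List.nodup_cons.mp hnodup).1 hqedges
    · -- agree outside cycle edges
      intro e he
      constructor
      · rintro (h | h)
        · exact Or.inl h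
        · exact absurd (hsubA e h) he
      · rintro (h | h)
        · exact Or.inl h
        · exact absurd (hsubB e h) he



/-- A global forcing set of `G`: a set `S` of edges of `G` distinguishing all
perfect matchings of `G`. -/
def IsGlobalForcingSet {V : Type*} (G : SimpleGraph V) (S : Set (Sym2 V)) : Prop :=
  S ⊆ G.edgeSet ∧
    ∀ M₁ M₂, IsPM G M₁ → IsPM G M₂ → M₁ ≠ M₂ → S ∩ M₁ ≠ S ∩ M₂

/-- The global forcing number: the minimum cardinality of a global forcing set. -/
noncomputable def gf {V : Type*} (G : SimpleGraph V) : ℕ :=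
  sInf {n | ∃ S, IsGlobalForcingSet G S ∧ S.ncard = n}

/-- An anti-forcing set of a perfect matching `M` of `G`: a set `S` of edges of `G`
disjoint from `M` such that `M` is the unique perfect matching of `G - S`. -/
def IsAntiForcingSet {V : Type*} (G : SimpleGraph V) (M S : Set (Sym2 V)) : Prop :=
  S ⊆ G.edgeSet ∧ S ∩ M = ∅ ∧ IsPM (G.deleteEdges S) M ∧
    ∀ M', IsPM (G.deleteEdges S) M' → M' = M

/-- The anti-forcing number of a perfect matching `M` of `G`. -/
noncomputable def af {V : Type*} (G : SimpleGraph V) (M : Set (Sym2 V)) : ℕ :=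
  sInf {n | ∃ S, IsAntiForcingSet G M S ∧ S.ncard = n}

/-- The maximum anti-forcing number of `G`. -/
noncomputable def Af {V : Type*} (G : SimpleGraph V) : ℕ :=
  sSup {n | ∃ M, IsPM G M ∧ af G M = n}

/-- A cycle `C` of `G` is conformal: `G - V(C)` has a perfect matching. -/
def IsConformalCycle {V : Type*} (G : SimpleGraph V) {a : V} (C : G.Walk a a) : Prop :=
  C.IsCycle ∧ Matchable (SimpleGraph.induce {v : V | v ∉ C.support} G)

/-- Let `G` be a matchable graph and `S` a set of edges of `G`. Then `S` is a global
forcing set of `G` if and only if `S` contains at least one edge of every conformal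
cycle of `G`. -/
theorem statement_4 {V : Type*} [Fintype V] (G : SimpleGraph V) (S : Set (Sym2 V))
    (hG : Matchable G) (hS : S ⊆ G.edgeSet) :
    IsGlobalForcingSet G S ↔
      ∀ (a : V) (C : G.Walk a a), IsConformalCycle G C → ∃ e ∈ S, e ∈ C.edges := by
  classical
  constructor
  · rintro ⟨hSsub, hforce⟩ a C hCC
    obtain ⟨hcyc, hconf⟩ := hCC
    by_contra hmiss
    push_neg at hmiss
    obtain ⟨M₁, M₂, h₁, h₂, hne, hsame⟩ := two_pms_of_conformal hG C hcyc hconf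
    apply hforce M₁ M₂ h₁ h₂ hne
    ext e
    simp only [Set.mem_inter_iff]
    constructor
    · rintro ⟨heS, heM⟩
      exact ⟨heS, (hsame e (hmiss e heS)).mp heM⟩
    · rintro ⟨heS, heM⟩
      exact ⟨heS, (hsame e (hmiss e heS)).mpr heM⟩
  · intro hhit
    refine ⟨hS, fun M₁ M₂ h₁ h₂ hne heq => ?_⟩
    obtain ⟨a, C, hcyc, hmatch, halt⟩ := exists_conformal_cycle h₁ h₂ hne
    obtain ⟨e, heS, heC⟩ := hhit a C ⟨hcyc, hmatch⟩
    rcases halt e heC with ⟨he1, he2⟩ | ⟨he1, he2⟩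
    · have hm : e ∈ S ∩ M₁ := ⟨heS, he1⟩
      rw [heq] at hm
      exact he2 hm.2
    · have hm : e ∈ S ∩ M₂ := ⟨heS, he1⟩
      rw [← heq] at hm
      exact he2 hm.2
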